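/- For every tree T with 2n vertices and every pair of positive integers a, b with a + b = 2n, the vertex set of T can be partitioned into sets R of size a and B of size b, with tree structures T_R on R and T_B on B, such that every edge of T_R and of T_B joins vertices at distance at most 2 in T. -/

import Mathlib

set_option linter.unusedSectionVars false
set_option maxHeartbeats 1000000

namespace TwoPartAux

variable {V : Type*} [DecidableEq V]

/-- A step of the relation `P` staying inside the finset `A`. -/
def stepOn (P : V → V → Prop) (A : Finset V) (u v : V) : Prop :=
  u ∈ A ∧ v ∈ A ∧ P u v

/-- `A` is connected under steps of `P` inside `A`. -/
def connOn (P : V → V → Prop) (A : Finset V) : Prop :=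
  ∀ x ∈ A, ∀ y ∈ A, Relation.ReflTransGen (stepOn P A) x y

lemma connOn_empty (P : V → V → Prop) : connOn P (∅ : Finset V) := by
  intro x hx; simp at hx

lemma connOn_singleton (P : V → V → Prop) (r : V) : connOn P ({r} : Finset V) := by
  intro x hx y hy
  simp only [Finset.mem_singleton] at hx hy
  subst hx; subst hy
  exact Relation.ReflTransGen.refl

variable (G : SimpleGraph V)

/-- Distinct vertices at distance at most 2. -/
def P2 : V → V → Prop := fun x y => x ≠ y ∧ G.dist x y ≤ 2

lemma P2_symm : Symmetric (P2 G) := fun _ _ h =>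
  ⟨h.1.symm, by rw [SimpleGraph.dist_comm]; exact h.2⟩

/-- The invariant for the recursively constructed ordering: a duplicate-free listing
of `S` starting at `r`, ending at distance at most 1 from `r`, all of whose prefixes
and suffixes are connected in the distance-≤2 graph. -/
def Good (r : V) (S : Finset V) (l : List V) : Prop :=
  l.Nodup ∧ l.toFinset = S ∧ l.head? = some r ∧
  (∃ z, l.getLast? = some z ∧ G.dist r z ≤ 1) ∧
  ∀ l1 l2, l = l1 ++ l2 → connOn (P2 G) l1.toFinset ∧ connOn (P2 G) l2.toFinset

/-- Key lemma: every connected set has a good ordering from any start vertex. -/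
lemma key (hc : G.Connected) :
    ∀ (m : ℕ) (S : Finset V) (r : V), S.card ≤ m → r ∈ S → connOn G.Adj S →
      ∃ l : List V, Good G r S l := by
  classical
  intro m
  induction m with
  | zero =>
    intro S r h hr _
    have := Finset.card_pos.2 ⟨r, hr⟩
    omega
  | succ m ih =>
    intro S r hcard hr hconn
    by_cases hsing : S = {r}
    · refine ⟨[r], by simp, by simp [hsing], rfl, ⟨r, rfl, by simp [SimpleGraph.dist_self]⟩, ?_⟩
      intro l1 l2 heq
      rcases l1 with _ | ⟨x, t⟩
      · simp only [List.nil_append] at heq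
        subst heq
        exact ⟨by simpa using connOn_empty (P2 G), by simpa using connOn_singleton (P2 G) r⟩
      · simp only [List.cons_append, List.cons.injEq] at heq
        obtain ⟨hx, heq2⟩ := heq
        subst hx
        have ht : t = [] := by
          cases t with
          | nil => rfl
          | cons a s => simp at heq2
        have hl2 : l2 = [] := by
          subst ht; simpa using heq2
        subst ht; subst hl2
        exact ⟨by simpa using connOn_singleton (P2 G) r, by simpa using connOn_empty (P2 G)⟩
    ·
      classical
      have hy : ∃ y ∈ S, y ≠ r := by
        by_contra hcon
        push_neg at hcon
        exact hsing (Finset.eq_singleton_iff_unique_mem.2 ⟨hr, hcon⟩)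
      obtain ⟨y, hyS, hyr⟩ := hy
      obtain ⟨c, hstep, -⟩ := ((hconn r hr y hyS).cases_head).resolve_left (fun h => hyr h.symm)
      obtain ⟨-, hcS, hrc⟩ := hstep
      have hcr : c ≠ r := (G.ne_of_adj hrc).symm
      set E := S.erase r with hE
      set C := S.filter (fun x => Relation.ReflTransGen (stepOn G.Adj E) c x) with hC
      have hcC : c ∈ C := Finset.mem_filter.2 ⟨hcS, Relation.ReflTransGen.refl⟩
      have hCS : C ⊆ S := Finset.filter_subset _ _
      have hCE : ∀ x ∈ C, x ∈ E := by
        intro x hx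
        have hx' := (Finset.mem_filter.1 hx).2
        rcases hx'.cases_tail with h | ⟨b, -, hstep⟩
        · subst h; exact Finset.mem_erase.2 ⟨hcr, hcS⟩
        · exact hstep.2.1
      have hrC : r ∉ C := fun h => (Finset.mem_erase.1 (hCE r h)).1 rfl
      have hCC : ∀ x, Relation.ReflTransGen (stepOn G.Adj E) c x →
          Relation.ReflTransGen (stepOn G.Adj C) c x := by
        intro x h
        induction h with
        | refl => exact Relation.ReflTransGen.refl
        | @tail b x h' hstep ihh =>
          have hbC : b ∈ C := Finset.mem_filter.2 ⟨Finset.mem_of_mem_erase hstep.1, h'⟩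
          have hxC : x ∈ C := Finset.mem_filter.2
            ⟨Finset.mem_of_mem_erase hstep.2.1, h'.tail hstep⟩
          exact ihh.tail ⟨hbC, hxC, hstep.2.2⟩
      have hsymmC : Symmetric (Relation.ReflTransGen (stepOn G.Adj C)) := by
        haveI : Std.Symm (stepOn G.Adj C) := ⟨fun _ _ hs => ⟨hs.2.1, hs.1, hs.2.2.symm⟩⟩
        exact fun _ _ h => Std.Symm.symm _ _ h
      have hCconn : connOn G.Adj C := by
        intro x hx y hy
        have hx' := hCC x (Finset.mem_filter.1 hx).2
        have hy' := hCC y (Finset.mem_filter.1 hy).2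
        exact (hsymmC hx').trans hy'
      set S' := S \ C with hS'
      have hrS' : r ∈ S' := Finset.mem_sdiff.2 ⟨hr, hrC⟩
      have hreachr : ∀ x ∈ S', Relation.ReflTransGen (stepOn G.Adj S') x r := by
        intro x hx
        have hxr : Relation.ReflTransGen (stepOn G.Adj S) x r :=
          hconn x (Finset.mem_sdiff.1 hx).1 r hr
        revert hx
        induction hxr using Relation.ReflTransGen.head_induction_on with
        | refl => intro _; exact Relation.ReflTransGen.refl
        | @head a b hstep h' ihh =>
          intro haS'
          by_cases har : a = r
          · subst har; exact Relation.ReflTransGen.refl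
          · by_cases hbr : b = r
            · subst hbr
              exact Relation.ReflTransGen.single ⟨haS', hrS', hstep.2.2⟩
            · have hbS' : b ∈ S' := by
                refine Finset.mem_sdiff.2 ⟨hstep.2.1, fun hbC => ?_⟩
                have haE : a ∈ E := Finset.mem_erase.2 ⟨har, hstep.1⟩
                have hbE : b ∈ E := Finset.mem_erase.2 ⟨hbr, hstep.2.1⟩
                have : Relation.ReflTransGen (stepOn G.Adj E) c a :=
                  ((Finset.mem_filter.1 hbC).2).tail ⟨hbE, haE, hstep.2.2.symm⟩
                exact (Finset.mem_sdiff.1 haS').2 (Finset.mem_filter.2 ⟨hstep.1, this⟩)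
              exact (ihh hbS').head ⟨haS', hbS', hstep.2.2⟩
      have hsymmS' : Symmetric (Relation.ReflTransGen (stepOn G.Adj S')) := by
        haveI : Std.Symm (stepOn G.Adj S') := ⟨fun _ _ hs => ⟨hs.2.1, hs.1, hs.2.2.symm⟩⟩
        exact fun _ _ h => Std.Symm.symm _ _ h
      have hS'conn : connOn G.Adj S' := by
        intro x hx y hy
        exact (hreachr x hx).trans (hsymmS' (hreachr y hy))
      have hCcard : C.card ≤ m := by
        have hss : C ⊂ S := ⟨hCS, fun h => hrC (h hr)⟩
        have := Finset.card_lt_card hss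
        omega
      have hS'card : S'.card ≤ m := by
        have hss : S' ⊂ S := ⟨Finset.sdiff_subset, fun h => (Finset.mem_sdiff.1 (h hcS)).2 hcC⟩
        have := Finset.card_lt_card hss
        omega
      obtain ⟨l', nd', tf', hd', ⟨z', lst', dz'⟩, sp'⟩ := ih S' r hS'card hrS' hS'conn
      obtain ⟨lc, ndc, tfc, hdc, ⟨zc, lstc, dzc⟩, spc⟩ := ih C c hCcard hcC hCconn
      have hl'ne : l' ≠ [] := by intro h; rw [h] at hd'; simp at hd'
      have hlcne : lc ≠ [] := by intro h; rw [h] at hdc; simp at hdc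

      -- the combined list
      have hl'S' : ∀ x, x ∈ l' ↔ x ∈ S' := fun x => by rw [← List.mem_toFinset, tf']
      have hlcC : ∀ x, x ∈ lc ↔ x ∈ C := fun x => by rw [← List.mem_toFinset, tfc]
      have hdisjSC : ∀ x, x ∈ S' → x ∈ C → False := fun x hx hxc =>
        (Finset.mem_sdiff.1 hx).2 hxc
      have P2symm : Symmetric (P2 G) := fun u v h =>
        ⟨h.1.symm, by rw [SimpleGraph.dist_comm]; exact h.2⟩
      have connOn_union : ∀ {A B : Finset V} {u w : V}, connOn (P2 G) A → connOn (P2 G) B →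
          u ∈ A → w ∈ B → P2 G u w → connOn (P2 G) (A ∪ B) := by
        intro A B u w hA hB huA hwB huw
        have symmU : Symmetric (Relation.ReflTransGen (stepOn (P2 G) (A ∪ B))) := by
          haveI : Std.Symm (stepOn (P2 G) (A ∪ B)) := ⟨fun _ _ hs => ⟨hs.2.1, hs.1, P2symm hs.2.2⟩⟩
          exact fun _ _ h => Std.Symm.symm _ _ h
        have mono : ∀ {D : Finset V}, D ⊆ A ∪ B → ∀ {x y : V},
            Relation.ReflTransGen (stepOn (P2 G) D) x y →
            Relation.ReflTransGen (stepOn (P2 G) (A ∪ B)) x y := by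
          intro D hD x y h
          exact Relation.ReflTransGen.mono (fun _ _ hs => ⟨hD hs.1, hD hs.2.1, hs.2.2⟩) _ _ h
        have key : ∀ x ∈ A ∪ B, Relation.ReflTransGen (stepOn (P2 G) (A ∪ B)) x w := by
          intro x hx
          rcases Finset.mem_union.1 hx with h | h
          · exact (mono Finset.subset_union_left (hA x h u huA)).tail
              ⟨Finset.mem_union_left _ huA, Finset.mem_union_right _ hwB, huw⟩
          · exact mono Finset.subset_union_right (hB x h w hwB)
        intro x hx y hy
        exact (key x hx).trans (symmU (key y hy))
      have connC : connOn (P2 G) C := by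
        have := (spc lc [] (by simp)).1
        rwa [tfc] at this
      have connS' : connOn (P2 G) S' := by
        have := (sp' l' [] (by simp)).1
        rwa [tf'] at this
      have hdrc1 : G.dist r c ≤ 1 := le_of_eq (SimpleGraph.dist_eq_one_iff_adj.2 hrc)
      refine ⟨l' ++ lc.reverse, ?_, ?_, ?_, ?_, ?_⟩
      · refine nd'.append (List.nodup_reverse.2 ndc) ?_
        intro x hx hx'
        exact hdisjSC x ((hl'S' x).1 hx) ((hlcC x).1 (List.mem_reverse.1 hx'))
      · ext x
        simp only [List.toFinset_append, List.toFinset_reverse, Finset.mem_union, tf', tfc]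
        rw [← Finset.sdiff_union_of_subset hCS, Finset.mem_union]
      · rw [List.head?_append_of_ne_nil l' hl'ne, hd']
      · refine ⟨c, ?_, hdrc1⟩
        rw [List.getLast?_append, List.getLast?_reverse, hdc]
        rfl
      · intro l1 l2 heq
        rw [eq_comm, List.append_eq_append_iff] at heq
        rcases heq with ⟨mm, hl'eq, hl2eq⟩ | ⟨mm, hl1eq, hlceq⟩
        · -- l' = l1 ++ mm, l2 = mm ++ lc.reverse
          refine ⟨(sp' l1 mm hl'eq).1, ?_⟩
          have hl2t : l2.toFinset = mm.toFinset ∪ C := by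
            rw [hl2eq, List.toFinset_append, List.toFinset_reverse, tfc]
          by_cases hmm : mm = []
          · subst hmm
            rw [hl2t]
            simpa using connC
          · have hw : mm.getLast? = some (mm.getLast hmm) := List.getLast?_eq_getLast hmm
            have hz'w : z' = mm.getLast hmm := by
              rw [hl'eq, List.getLast?_append, hw] at lst'
              simpa using lst'.symm
            have hz'mm : z' ∈ mm.toFinset := by
              rw [hz'w]
              exact List.mem_toFinset.2 (List.getLast_mem hmm)
            have hz'S' : z' ∈ S' := by
              refine (hl'S' z').1 ?_
              rw [hl'eq]
              exact List.mem_append_right l1 (List.mem_toFinset.1 hz'mm)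
            have hP2 : P2 G z' c := by
              constructor
              · intro h; exact hdisjSC z' hz'S' (h ▸ hcC)
              · calc G.dist z' c ≤ G.dist z' r + G.dist r c := hc.dist_triangle
                  _ ≤ 1 + 1 := by
                      have : G.dist z' r ≤ 1 := by rwa [SimpleGraph.dist_comm]
                      omega
                  _ = 2 := rfl
            rw [hl2t]
            exact connOn_union (sp' l1 mm hl'eq).2 connC hz'mm hcC hP2
        · -- l1 = l' ++ mm, lc.reverse = mm ++ l2
          have hlc2 : lc = l2.reverse ++ mm.reverse := by
            have := congrArg List.reverse hlceq
            simpa using this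
          have hl1t : l1.toFinset = S' ∪ mm.toFinset := by
            rw [hl1eq, List.toFinset_append, tf']
          refine ⟨?_, ?_⟩
          · by_cases hmm : mm = []
            · subst hmm
              rw [hl1t]
              simpa using connS'
            · have hmmr : mm.reverse ≠ [] := by simpa using hmm
              have hw : mm.reverse.getLast? = some (mm.reverse.getLast hmmr) :=
                List.getLast?_eq_getLast hmmr
              have hzcw : zc = mm.reverse.getLast hmmr := by
                rw [hlc2, List.getLast?_append, hw] at lstc
                simpa using lstc.symm
              have hzcmm : zc ∈ mm.toFinset := by
                rw [hzcw, ← List.toFinset_reverse]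
                exact List.mem_toFinset.2 (List.getLast_mem hmmr)
              have hzcC : zc ∈ C := by
                refine (hlcC zc).1 ?_
                rw [hlc2]
                exact List.mem_append_right _ (by
                  simpa using List.mem_toFinset.1 hzcmm)
              have hP2 : P2 G r zc := by
                constructor
                · intro h; exact hdisjSC r hrS' (h ▸ hzcC)
                · calc G.dist r zc ≤ G.dist r c + G.dist c zc := hc.dist_triangle
                    _ ≤ 1 + 1 := by omega
                    _ = 2 := rfl
              rw [hl1t]
              have hconnmm : connOn (P2 G) mm.toFinset := by
                have := (spc l2.reverse mm.reverse hlc2).2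
                rwa [List.toFinset_reverse] at this
              exact connOn_union connS' hconnmm hrS' hzcmm hP2
          · have := (spc l2.reverse mm.reverse hlc2).1
            rwa [List.toFinset_reverse] at this



lemma reach_del {W : Type*} {K : SimpleGraph W} {v w : W}
    (hvw : (K \ SimpleGraph.fromEdgeSet {s(v, w)}).Reachable v w) :
    ∀ {a b : W}, K.Reachable a b → (K \ SimpleGraph.fromEdgeSet {s(v, w)}).Reachable a b := by
  intro a b hab
  obtain ⟨p⟩ := hab
  induction p with
  | nil => exact SimpleGraph.Reachable.refl _
  | @cons u x c h q ihq =>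
    refine SimpleGraph.Reachable.trans ?_ ihq
    by_cases he : s(u, x) = s(v, w)
    · rcases Sym2.eq_iff.1 he with ⟨rfl, rfl⟩ | ⟨rfl, rfl⟩
      · exact hvw
      · exact hvw.symm
    · refine SimpleGraph.Adj.reachable ?_
      rw [SimpleGraph.sdiff_adj]
      refine ⟨h, fun hadj => ?_⟩
      rw [SimpleGraph.fromEdgeSet_adj] at hadj
      exact he (by simpa using hadj.1)

lemma exists_spanning_tree {W : Type*} [Fintype W] (K : SimpleGraph W) (hK : K.Connected) :
    ∃ T : SimpleGraph W, T.IsTree ∧ T ≤ K := by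
  classical
  suffices h : ∀ (m : ℕ) (K : SimpleGraph W), K.edgeSet.ncard ≤ m → K.Connected →
      ∃ T, T.IsTree ∧ T ≤ K from h K.edgeSet.ncard K le_rfl hK
  intro m
  induction m with
  | zero =>
    intro K hm hKc
    refine ⟨K, ⟨hKc, ?_⟩, le_rfl⟩
    intro v c hcyc
    have h3 := hcyc.three_le_length
    have hempty : K.edgeSet = ∅ := by
      have : K.edgeSet.Finite := Set.toFinite _
      rw [← Set.ncard_eq_zero this]
      omega
    cases hce : c.edges with
    | nil =>
      have := c.length_edges
      rw [hce] at this
      simp at this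
      omega
    | cons e es =>
      have he : e ∈ K.edgeSet := c.edges_subset_edgeSet (by rw [hce]; exact List.mem_cons_self)
      rw [hempty] at he
      exact he
  | succ m ih =>
    intro K hm hKc
    by_cases hac : K.IsAcyclic
    · exact ⟨K, ⟨hKc, hac⟩, le_rfl⟩
    · rw [SimpleGraph.isAcyclic_iff_forall_adj_isBridge] at hac
      push_neg at hac
      obtain ⟨v, w, hadj, hnb⟩ := hac
      rw [SimpleGraph.isBridge_iff] at hnb
      push_neg at hnb
      have hreach := hnb
      have hle : (K \ SimpleGraph.fromEdgeSet {s(v, w)}) ≤ K := by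
        intro a b hab
        rw [SimpleGraph.sdiff_adj] at hab
        exact hab.1
      have hpre : (K \ SimpleGraph.fromEdgeSet {s(v, w)}).Connected := by
        have : Nonempty W := hKc.nonempty
        exact ⟨fun a b => reach_del hreach (hKc.preconnected a b)⟩
      have hedge : (K \ SimpleGraph.fromEdgeSet {s(v, w)}).edgeSet = K.edgeSet \ {s(v, w)} := by
        rw [SimpleGraph.edgeSet_sdiff, SimpleGraph.edgeSet_fromEdgeSet,
          SimpleGraph.edgeSet_sdiff_sdiff_isDiag]
      have hcard : (K \ SimpleGraph.fromEdgeSet {s(v, w)}).edgeSet.ncard ≤ m := by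
        have hmem : s(v, w) ∈ K.edgeSet := hadj
        have hfin : K.edgeSet.Finite := Set.toFinite _
        have := Set.ncard_diff_singleton_lt_of_mem hmem hfin
        rw [hedge]
        omega
      obtain ⟨T, hT, hTle⟩ := ih _ hcard hpre
      exact ⟨T, hT, hTle.trans hle⟩


variable {V : Type*} [DecidableEq V]

/-- From a `connOn`-witness for the distance-≤2 relation, build a tree structure. -/
lemma build (G : SimpleGraph V) (A : Finset V) (hA : connOn (P2 G) A) (hne : A.Nonempty) :
    ∃ H : SimpleGraph {x // x ∈ A}, H.IsTree ∧
      ∀ u v : {x // x ∈ A}, H.Adj u v → G.dist u.1 v.1 ≤ 2 := by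
  classical
  set K : SimpleGraph {x // x ∈ A} :=
    { Adj := fun u v => P2 G u.1 v.1
      symm := ⟨fun u v h => P2_symm G h⟩
      loopless := ⟨fun u h => h.1 rfl⟩ } with hKdef
  have hlift : ∀ {x y : V}, Relation.ReflTransGen (stepOn (P2 G) A) x y →
      ∀ (hx : x ∈ A) (hy : y ∈ A), K.Reachable ⟨x, hx⟩ ⟨y, hy⟩ := by
    intro x y h
    induction h with
    | refl => intro hx hy; exact SimpleGraph.Reachable.refl _
    | @tail b y h' hstep ihh =>
      intro hx hy
      refine (ihh hx hstep.1).trans (SimpleGraph.Adj.reachable ?_)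
      exact (hstep.2.2 : P2 G b y)
  have hKc : K.Connected := by
    obtain ⟨x0, hx0⟩ := hne
    have : Nonempty {x // x ∈ A} := ⟨⟨x0, hx0⟩⟩
    exact ⟨fun u v => hlift (hA u.1 u.2 v.1 v.2) u.2 v.2⟩
  obtain ⟨T, hT, hle⟩ := exists_spanning_tree K hKc
  refine ⟨T, hT, fun u v h => ?_⟩
  exact ((hle h : K.Adj u v).2 : G.dist u.1 v.1 ≤ 2)

end TwoPartAux

open TwoPartAux in
/-- For every tree `G` with `2 * n` vertices and all positive integers `a`, `b`
with `a + b = 2 * n`, the vertex set of `G` can be partitioned into a set `R`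
of size `a` and its complement of size `b`, each carrying a tree structure all
of whose edges join vertices at distance at most `2` in `G`. -/
theorem unbalanced_two_partition_dist_two {V : Type*} [Fintype V] [DecidableEq V]
    (G : SimpleGraph V) (hG : G.IsTree) (n a b : ℕ)
    (ha : 0 < a) (hb : 0 < b) (hab : a + b = 2 * n)
    (hcard : Fintype.card V = 2 * n) :
    ∃ R : Finset V, R.card = a ∧ Rᶜ.card = b ∧
      (∃ HR : SimpleGraph {x // x ∈ R}, HR.IsTree ∧
        ∀ u v : {x // x ∈ R}, HR.Adj u v → G.dist u.1 v.1 ≤ 2) ∧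
      (∃ HB : SimpleGraph {x // x ∈ Rᶜ}, HB.IsTree ∧
        ∀ u v : {x // x ∈ Rᶜ}, HB.Adj u v → G.dist u.1 v.1 ≤ 2) := by
  classical
  have hpos : 0 < Fintype.card V := by omega
  have hne : Nonempty V := Fintype.card_pos_iff.1 hpos
  obtain ⟨r⟩ := hne
  have hGc : G.Connected := hG.isConnected
  have hconn : connOn G.Adj (Finset.univ : Finset V) := by
    intro x _ y _
    obtain ⟨p⟩ := hGc.preconnected x y
    induction p with
    | nil => exact Relation.ReflTransGen.refl
    | cons h q ihq =>
      exact Relation.ReflTransGen.head ⟨Finset.mem_univ _, Finset.mem_univ _, h⟩ (ihq (Finset.mem_univ _) (Finset.mem_univ _))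
  obtain ⟨l, nd, tf, -, -, sp⟩ :=
    key G hGc Finset.univ.card Finset.univ r le_rfl (Finset.mem_univ r) hconn
  have hlen : l.length = 2 * n := by
    rw [← List.toFinset_card_of_nodup nd, tf, Finset.card_univ, hcard]
  have ndt : (l.take a).Nodup := nd.sublist (List.take_sublist a l)
  have ndd : (l.drop a).Nodup := nd.sublist (List.drop_sublist a l)
  set R := (l.take a).toFinset with hR
  have hRcard : R.card = a := by
    rw [hR, List.toFinset_card_of_nodup ndt, List.length_take]
    omega
  have hcompl : Rᶜ = (l.drop a).toFinset := by
    ext x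
    have hxl : x ∈ l := by
      have : x ∈ l.toFinset := by rw [tf]; exact Finset.mem_univ x
      exact List.mem_toFinset.1 this
    simp only [Finset.mem_compl, hR, List.mem_toFinset]
    constructor
    · intro hnt
      rcases List.mem_append.1 (by rw [List.take_append_drop a l]; exact hxl :
          x ∈ l.take a ++ l.drop a) with h | h
      · exact absurd h hnt
      · exact h
    · intro hd ht
      exact (List.disjoint_take_drop nd le_rfl) ht hd
  have hBcard : Rᶜ.card = b := by
    rw [hcompl, List.toFinset_card_of_nodup ndd, List.length_drop]
    omega
  have hsp := sp (l.take a) (l.drop a) (List.take_append_drop a l).symm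
  have hRne : R.Nonempty := Finset.card_pos.1 (by rw [hRcard]; omega)
  have hBne : Rᶜ.Nonempty := Finset.card_pos.1 (by rw [hBcard]; omega)
  obtain ⟨HR, hHR1, hHR2⟩ := build G R hsp.1 hRne
  obtain ⟨HB, hHB1, hHB2⟩ := build G Rᶜ (by rw [hcompl]; exact hsp.2) hBne
  exact ⟨R, hRcard, hBcard, ⟨HR, hHR1, hHR2⟩, ⟨HB, hHB1, hHB2⟩⟩
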